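/- (Proposition 4.5: characteristic function of the capped period return via the log-return density.) Let α > 0, β ∈ (−π, π), d > 0, m ∈ ℝ, and let Y be a real random variable with Meixner density f(·; α, β, d, m). Let c ≥ 0, g ∈ ℝ, n ≥ 1 and set Z := min(c, e^{Y} − 1) − g/n. Then for every x ∈ ℝ, E[e^{i x Z}] = e^{−i x g/n} · ( e^{i x c} + ∫_{−∞}^{ln(1+c)} [ e^{i x (e^{u} − 1)} − e^{i x c} ] · f(u; α, β, d, m) du ). -/

import Mathlib

open MeasureTheory Real Set
open scoped NNReal ENNReal

/-- The Meixner probability density with scaling parameter `α`, skewness parameter `β`,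
peakedness parameter `d` and location parameter `m`. -/
noncomputable def meixnerDensity (α β d m : ℝ) (x : ℝ) : ℝ :=
  (2 * Real.cos (β / 2)) ^ (2 * d) / (2 * Real.pi * α * Real.Gamma (2 * d)) *
    Real.exp (β * (x - m) / α) *
    ‖Complex.Gamma ((d : ℂ) + Complex.I * (((x - m) / α : ℝ) : ℂ))‖ ^ 2

lemma meixner_continuous (α β d m : ℝ) (hd : 0 < d) :
    Continuous (meixnerDensity α β d m) := by
  have hline : Continuous fun u : ℝ => (d : ℂ) + Complex.I * (((u - m) / α : ℝ) : ℂ) := by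
    continuity
  have hG : Continuous fun u : ℝ =>
      Complex.Gamma ((d : ℂ) + Complex.I * (((u - m) / α : ℝ) : ℂ)) := by
    rw [continuous_iff_continuousAt]
    intro u
    refine (Complex.differentiableAt_Gamma _ ?_).continuousAt.comp hline.continuousAt
    intro k hk
    have h1 : ((d : ℂ) + Complex.I * (((u - m) / α : ℝ) : ℂ)).re = d := by simp
    rw [hk] at h1
    simp only [Complex.neg_re, Complex.natCast_re] at h1
    have : (0:ℝ) ≤ (k : ℝ) := Nat.cast_nonneg k
    linarith
  unfold meixnerDensity
  exact (continuous_const.mul (Real.continuous_exp.comp (by continuity))).mul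
    ((continuous_norm.comp hG).pow 2)

lemma meixner_nonneg (α β d m : ℝ) (hα : 0 < α) (hβ1 : -Real.pi < β) (hβ2 : β < Real.pi)
    (hd : 0 < d) (x : ℝ) : 0 ≤ meixnerDensity α β d m x := by
  unfold meixnerDensity
  have hcos : 0 < Real.cos (β / 2) :=
    Real.cos_pos_of_mem_Ioo ⟨by linarith, by linarith⟩
  have h1 : (0:ℝ) ≤ (2 * Real.cos (β / 2)) ^ (2 * d) := Real.rpow_nonneg (by linarith) _
  have h2 : 0 < Real.Gamma (2 * d) := Real.Gamma_pos_of_pos (by linarith)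
  have hpi := Real.pi_pos
  have hden : 0 < 2 * Real.pi * α * Real.Gamma (2 * d) := by positivity
  exact mul_nonneg (mul_nonneg (div_nonneg h1 hden.le) (Real.exp_pos _).le) (sq_nonneg _)

/-- Proposition 4.5: characteristic function of the capped period return
`Z = min(c, e^Y - 1) - g/n` via the Meixner log-return density. -/
theorem charFun_capped_return_via_log_density (α β d m : ℝ) (hα : 0 < α)
    (hβ : β ∈ Set.Ioo (-Real.pi) Real.pi) (hd : 0 < d)
    {Ω : Type*} [MeasurableSpace Ω] (μ : Measure Ω) [IsProbabilityMeasure μ]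
    (Y : Ω → ℝ) (hY : Measurable Y)
    (hdens : μ.map Y = volume.withDensity (fun x => ENNReal.ofReal (meixnerDensity α β d m x)))
    (c g : ℝ) (hc : 0 ≤ c) (n : ℕ) (hn : 1 ≤ n)
    (Z : Ω → ℝ) (hZ : ∀ ω, Z ω = min c (Real.exp (Y ω) - 1) - g / n) (x : ℝ) :
    (∫ ω, Complex.exp (Complex.I * (x : ℂ) * (Z ω : ℂ)) ∂μ)
      = Complex.exp (-(Complex.I * (x : ℂ) * ((g / n : ℝ) : ℂ))) *
          (Complex.exp (Complex.I * (x : ℂ) * (c : ℂ))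
            + ∫ u in Set.Iic (Real.log (1 + c)),
                (Complex.exp (Complex.I * (x : ℂ) * ((Real.exp u - 1 : ℝ) : ℂ))
                    - Complex.exp (Complex.I * (x : ℂ) * (c : ℂ))) *
                  ((meixnerDensity α β d m u : ℝ) : ℂ)) := by
  obtain ⟨hβ1, hβ2⟩ := hβ
  set D := meixnerDensity α β d m with hDdef
  have hDc : Continuous D := meixner_continuous α β d m hd
  have hDm : Measurable D := hDc.measurable
  have hD0 : ∀ u, 0 ≤ D u := meixner_nonneg α β d m hα hβ1 hβ2 hd
  have hL : (0:ℝ) < 1 + c := by linarith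
  set L := Real.log (1 + c) with hLdef
  set ec : ℂ := Complex.exp (Complex.I * x * (c : ℂ)) with hec
  set ψ : ℝ → ℂ := fun u => Complex.exp (Complex.I * x * ((Real.exp u - 1 : ℝ) : ℂ)) with hψ
  set φ : ℝ → ℂ := fun y => Complex.exp (Complex.I * x * ((min c (Real.exp y - 1) : ℝ) : ℂ))
    with hφ
  have hφc : Continuous φ :=
    Complex.continuous_exp.comp (continuous_const.mul (Complex.continuous_ofReal.comp
      (continuous_const.min (Real.continuous_exp.sub continuous_const))))
  -- total mass of the density is 1
  have hprob : IsProbabilityMeasure (μ.map Y) := Measure.isProbabilityMeasure_map hY.aemeasurable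
  have hlint : ∫⁻ u, ENNReal.ofReal (D u) = 1 := by
    have h1 : (volume.withDensity (fun u => ENNReal.ofReal (D u))) Set.univ = 1 := by
      rw [← hdens]; exact hprob.measure_univ
    rwa [withDensity_apply _ MeasurableSet.univ, Measure.restrict_univ] at h1
  have hDint : Integrable D := by
    refine ⟨hDm.aestronglyMeasurable, ?_⟩
    rw [hasFiniteIntegral_iff_ofReal (ae_of_all _ hD0), hlint]
    exact ENNReal.one_lt_top
  have hDone : ∫ u, D u = 1 := by
    rw [integral_eq_lintegral_of_nonneg_ae (ae_of_all _ hD0) hDm.aestronglyMeasurable, hlint]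
    simp
  -- step 1 : pull out the constant factor
  have h1 : ∀ ω, Complex.exp (Complex.I * x * (Z ω : ℂ))
      = Complex.exp (-(Complex.I * x * ((g / n : ℝ) : ℂ))) * φ (Y ω) := by
    intro ω
    rw [hφ, ← Complex.exp_add, hZ ω]
    congr 1
    push_cast
    ring
  simp only [h1]
  rw [integral_const_mul]
  congr 1
  -- step 2 : move to the pushforward, then to the Lebesgue integral with density
  rw [show (∫ ω, φ (Y ω) ∂μ) = ∫ y, φ y ∂(μ.map Y) from
    (integral_map hY.aemeasurable hφc.aestronglyMeasurable).symm, hdens]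
  rw [show (fun u => ENNReal.ofReal (D u)) = fun u => (((D u).toNNReal : ℝ≥0) : ℝ≥0∞) from rfl]
  rw [integral_withDensity_eq_integral_smul hDm.real_toNNReal]
  have hsmul : ∀ u, (D u).toNNReal • φ u = (D u : ℂ) * φ u := by
    intro u
    rw [NNReal.smul_def, Real.coe_toNNReal _ (hD0 u), Complex.real_smul]
  simp only [hsmul]
  -- step 3 : split according to whether u ≤ L
  have hsplit : ∀ u, (D u : ℂ) * φ u
      = (D u : ℂ) * ec + Set.indicator (Set.Iic L) (fun u => (ψ u - ec) * (D u : ℂ)) u := by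
    intro u
    by_cases hu : u ≤ L
    · have hmin : min c (Real.exp u - 1) = Real.exp u - 1 := by
        have := (Real.le_log_iff_exp_le hL).mp hu
        exact min_eq_right (by linarith)
      rw [Set.indicator_of_mem (Set.mem_Iic.mpr hu)]
      simp only [hφ, hψ, hmin]
      ring
    · have hmin : min c (Real.exp u - 1) = c := by
        have hgt : ¬ Real.exp u ≤ 1 + c := fun h => hu ((Real.le_log_iff_exp_le hL).mpr h)
        push_neg at hgt
        exact min_eq_left (by linarith)
      rw [Set.indicator_of_notMem (by simpa using hu)]
      simp only [hφ, hmin]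
      ring
  simp only [hsplit]
  -- step 4 : integrability of both pieces
  have hbd : ∀ u, ‖ψ u - ec‖ ≤ 2 := by
    intro u
    have h1 : ‖ψ u‖ = 1 := by
      rw [hψ]
      simp only [Complex.norm_exp]
      norm_num [Complex.mul_re]
    have h2 : ‖ec‖ = 1 := by
      rw [hec]
      simp only [Complex.norm_exp]
      norm_num [Complex.mul_re]
    calc ‖ψ u - ec‖ ≤ ‖ψ u‖ + ‖ec‖ := norm_sub_le _ _
      _ = 2 := by rw [h1, h2]; norm_num
  have hint2 : Integrable (fun u => (ψ u - ec) * (D u : ℂ)) := by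
    refine Integrable.bdd_mul (c := 2) hDint.ofReal ?_ (ae_of_all _ hbd)
    exact ((Complex.continuous_exp.comp (by continuity)).sub continuous_const).aestronglyMeasurable
  have hint1 : Integrable (fun u => (D u : ℂ) * ec) := hDint.ofReal.mul_const ec
  rw [integral_add hint1 (hint2.indicator measurableSet_Iic)]
  rw [integral_indicator measurableSet_Iic]
  rw [integral_mul_const]
  have hco : (∫ a : ℝ, ((D a : ℝ) : ℂ)) = ((∫ a : ℝ, D a : ℝ) : ℂ) := integral_ofReal
  rw [hco, hDone, Complex.ofReal_one, one_mul]
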